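/- For a profinite set S, a commutative ring A, and a point s ∈ S, the evaluation map LC(S,A) → A, f ↦ f(s), is a flat ring homomorphism. -/

import Mathlib

/-- For a profinite set `S`, a commutative ring `A` and a point `s ∈ S`, the evaluation
map `LC(S,A) → A`, `f ↦ f(s)`, is a flat ring homomorphism. -/
theorem locallyConstant_evalRingHom_flat (S : Type*) [TopologicalSpace S] [CompactSpace S]
    [T2Space S] [TotallyDisconnectedSpace S] (A : Type*) [CommRing A] (s : S) :
    (LocallyConstant.evalRingHom (X := S) (Y := A) s).Flat := by
  unfold RingHom.Flat
  letI alg : Algebra (LocallyConstant S A) A :=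
    (LocallyConstant.evalRingHom (X := S) (Y := A) s).toAlgebra
  -- `A` is the localization of `LC(S,A)` at the submonoid of functions taking value 1 at `s`
  -- whose image consists of `0` and `1` (characteristic functions of clopen nbhds of `s`).
  let M : Submonoid (LocallyConstant S A) :=
    { carrier := { f | f s = 1 ∧ f * f = f }
      one_mem' := by simp
      mul_mem' := by
        rintro f g ⟨hf1, hf2⟩ ⟨hg1, hg2⟩
        refine ⟨by simp [hf1, hg1], ?_⟩
        rw [show f * g * (f * g) = (f * f) * (g * g) by ring, hf2, hg2] }
  haveI : IsLocalization M A := by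
    refine ⟨⟨?_, ?_, ?_⟩⟩
    · rintro ⟨f, hf1, _⟩
      simpa [RingHom.algebraMap_toAlgebra] using (hf1 ▸ isUnit_one : IsUnit (f s))
    · intro a
      exact ⟨(LocallyConstant.const S a, 1), by
        simp [RingHom.algebraMap_toAlgebra]⟩
    · intro f g h
      simp only [RingHom.algebraMap_toAlgebra, LocallyConstant.evalRingHom_apply] at h
      set U : Set S := { x | f x = g x } with hU_def
      have hU : IsClopen U := by
        have : U = (f - g) ⁻¹' {0} := by
          ext x
          simp [hU_def, LocallyConstant.sub_apply, sub_eq_zero]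
        rw [this]
        exact (f - g).isLocallyConstant.isClopen_fiber 0
      refine ⟨⟨LocallyConstant.charFn A hU, ?_, ?_⟩, ?_⟩
      · exact Set.indicator_of_mem (by simpa [hU_def] using h) 1
      · ext x
        by_cases hx : x ∈ U <;>
          simp [LocallyConstant.coe_charFn,
            Set.indicator_of_mem, Set.indicator_of_notMem, hx]
      · ext x
        by_cases hx : x ∈ U
        · have hfg : f x = g x := hx
          simp [LocallyConstant.coe_charFn,
            Set.indicator_of_mem hx, hfg]
        · simp [LocallyConstant.coe_charFn,
            Set.indicator_of_notMem hx]
  exact IsLocalization.flat A M
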